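/- (Reduction from hitting ordered sets, single-set cost bounds.) Let n, m ≥ 1, let π : {1,…,m} → {1,…,n} be injective, and let ℓ = ⌊log₂ m⌋. Define the prefix sets P_j = {π(1),…,π(2^j)} for 0 ≤ j ≤ ℓ and P_{ℓ+1} = {π(1),…,π(m)}. For H ⊆ {1,…,n} define the ordered cost c₁(H) = k − 1 if k is the least index with π(k) ∈ H, and c₁(H) = m if no π(k) lies in H; and define c₂(H) = ∑_{j=0}^{ℓ+1} |P_j|·1[H ∩ P_j = ∅]. Then c₁(H) ≤ c₂(H) ≤ 3·c₁(H). -/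

import Mathlib

private lemma sum_two_pow (n : ℕ) : ∑ i ∈ Finset.range n, 2^i = 2^n - 1 := by
  induction n with
  | zero => simp
  | succ n ih =>
    rw [Finset.sum_range_succ, ih]
    have := Nat.one_le_two_pow (n := n)
    have : (2:ℕ)^(n+1) = 2 * 2^n := by ring
    omega

/-- Reduction from hitting ordered sets, single-set cost bounds: with
`ℓ = ⌊log₂ m⌋`, prefix sets `P_j = {π(1),…,π(2^j)}` for `j ≤ ℓ` and
`P_{ℓ+1} = {π(1),…,π(m)}`, ordered cost `c₁(H)` (the number of elements of the
ordered set strictly before the first hit element, or `m` if none is hit) and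
`c₂(H) = ∑_{j=0}^{ℓ+1} |P_j|·1[H ∩ P_j = ∅]`, one has `c₁(H) ≤ c₂(H) ≤ 3·c₁(H)`. -/
theorem stmt14 (n m : ℕ) (hn : 1 ≤ n) (hm : 1 ≤ m)
    (π : Fin m → Fin n) (hπ : Function.Injective π)
    (ℓ : ℕ) (hℓ : ℓ = Nat.log 2 m)
    (P : ℕ → Finset (Fin n))
    (hP : ∀ j ≤ ℓ, P j = (Finset.univ.filter (fun i : Fin m => (i : ℕ) < 2 ^ j)).image π)
    (hPtop : P (ℓ + 1) = Finset.univ.image π)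
    (H : Finset (Fin n))
    (c₁ : ℕ)
    (hc₁ : c₁ = if h : (Finset.univ.filter (fun i : Fin m => π i ∈ H)).Nonempty then
        (((Finset.univ.filter (fun i : Fin m => π i ∈ H)).min' h : Fin m) : ℕ)
      else m)
    (c₂ : ℕ)
    (hc₂ : c₂ = ∑ j ∈ Finset.range (ℓ + 2), if H ∩ P j = ∅ then (P j).card else 0) :
    c₁ ≤ c₂ ∧ c₂ ≤ 3 * c₁ := by
  have h2ℓ : 2 ^ ℓ ≤ m := hℓ ▸ Nat.pow_log_le_self 2 (by omega)
  have hcard : ∀ j ≤ ℓ, (P j).card = 2 ^ j := by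
    intro j hj
    have h2j : 2 ^ j ≤ m := le_trans (Nat.pow_le_pow_right (by norm_num) hj) h2ℓ
    rw [hP j hj, Finset.card_image_of_injective _ hπ]
    refine Eq.trans ?_ (Finset.card_range (2 ^ j))
    refine Finset.card_bij (fun i _ => (i : ℕ)) ?_ ?_ ?_
    · intro a ha; simp at ha ⊢; exact ha
    · intro a _ b _ hab; exact Fin.val_injective hab
    · intro b hb
      simp only [Finset.mem_range] at hb
      exact ⟨⟨b, lt_of_lt_of_le hb h2j⟩, by simp [hb], rfl⟩
  have hcardtop : (P (ℓ+1)).card = m := by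
    rw [hPtop, Finset.card_image_of_injective _ hπ, Finset.card_univ, Fintype.card_fin]
  by_cases hne : (Finset.univ.filter (fun i : Fin m => π i ∈ H)).Nonempty
  · set S := Finset.univ.filter (fun i : Fin m => π i ∈ H) with hS
    set k := S.min' hne with hk
    have hkH : π k ∈ H := by
      have := S.min'_mem hne
      simp only [hS, Finset.mem_filter] at this
      exact this.2
    have hkmin : ∀ i : Fin m, π i ∈ H → (k : ℕ) ≤ (i : ℕ) := by
      intro i hi
      exact S.min'_le i (by simp [hS, hi])
    have hc1 : c₁ = (k : ℕ) := by rw [hc₁, dif_pos hne]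
    have hempty : ∀ j ≤ ℓ, (H ∩ P j = ∅ ↔ 2 ^ j ≤ (k : ℕ)) := by
      intro j hj
      rw [hP j hj]
      constructor
      · intro he
        by_contra hlt
        push_neg at hlt
        have : π k ∈ H ∩ (Finset.univ.filter (fun i : Fin m => (i : ℕ) < 2 ^ j)).image π :=
          Finset.mem_inter.2 ⟨hkH, Finset.mem_image_of_mem _ (by simp [hlt])⟩
        rw [he] at this
        exact absurd this (Finset.notMem_empty _)
      · intro hle
        rw [Finset.eq_empty_iff_forall_notMem]
        intro x hx
        rw [Finset.mem_inter] at hx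
        obtain ⟨hxH, hxP⟩ := hx
        obtain ⟨i, hi, rfl⟩ := Finset.mem_image.1 hxP
        simp only [Finset.mem_filter, Finset.mem_univ, true_and] at hi
        have := hkmin i hxH
        omega
    have htop : ¬ (H ∩ P (ℓ+1) = ∅) := by
      rw [hPtop]
      intro he
      have : π k ∈ H ∩ Finset.univ.image π :=
        Finset.mem_inter.2 ⟨hkH, Finset.mem_image_of_mem _ (Finset.mem_univ _)⟩
      rw [he] at this
      exact absurd this (Finset.notMem_empty _)
    have hc2 : c₂ = ∑ j ∈ Finset.range (ℓ+1), if 2 ^ j ≤ (k:ℕ) then 2 ^ j else 0 := by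
      rw [hc₂, Finset.sum_range_succ, if_neg htop, add_zero]
      apply Finset.sum_congr rfl
      intro j hj
      rw [Finset.mem_range] at hj
      have hj' : j ≤ ℓ := by omega
      rw [hcard j hj']
      simp only [hempty j hj']
    by_cases hk0 : (k : ℕ) = 0
    · have hz : c₂ = 0 := by
        rw [hc2]
        apply Finset.sum_eq_zero
        intro j _
        rw [if_neg]
        have := Nat.one_le_two_pow (n := j)
        omega
      omega
    · set t := Nat.log 2 (k : ℕ) with ht
      have htℓ : t ≤ ℓ := by
        rw [ht, hℓ]
        exact Nat.log_mono_right (le_of_lt k.isLt)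
      have hiff : ∀ j, (2 ^ j ≤ (k:ℕ) ↔ j ≤ t) := by
        intro j
        rw [ht]
        exact (Nat.le_log_iff_pow_le (by norm_num) hk0).symm
      have hc2' : c₂ = 2 ^ (t+1) - 1 := by
        rw [hc2, ← sum_two_pow, ← Finset.sum_filter]
        congr 1
        ext j
        simp only [Finset.mem_filter, Finset.mem_range, hiff j]
        omega
      have hlt : (k : ℕ) < 2 ^ (t+1) := ht ▸ Nat.lt_pow_succ_log_self (by norm_num) (k : ℕ)
      have hge : 2 ^ t ≤ (k : ℕ) := ht ▸ Nat.pow_log_le_self 2 hk0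
      have hpow : (2:ℕ) ^ (t+1) = 2 * 2 ^ t := by ring
      omega
  · have hc1 : c₁ = m := by rw [hc₁, dif_neg hne]
    have hnotin : ∀ i : Fin m, π i ∉ H := by
      intro i hi
      exact hne ⟨i, by simp [hi]⟩
    have hemp : ∀ j < ℓ + 2, H ∩ P j = ∅ := by
      intro j hj
      rw [Finset.eq_empty_iff_forall_notMem]
      intro x hx
      rw [Finset.mem_inter] at hx
      obtain ⟨hxH, hxP⟩ := hx
      rcases Nat.lt_or_ge j (ℓ+1) with h | h
      · rw [hP j (by omega)] at hxP
        obtain ⟨i, _, rfl⟩ := Finset.mem_image.1 hxP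
        exact hnotin i hxH
      · have hje : j = ℓ + 1 := by omega
        subst hje
        rw [hPtop] at hxP
        obtain ⟨i, _, rfl⟩ := Finset.mem_image.1 hxP
        exact hnotin i hxH
    have hc2 : c₂ = 2 ^ (ℓ+1) - 1 + m := by
      rw [hc₂, Finset.sum_range_succ, if_pos (hemp (ℓ+1) (by omega)), hcardtop]
      congr 1
      rw [← sum_two_pow]
      apply Finset.sum_congr rfl
      intro j hj
      rw [Finset.mem_range] at hj
      rw [if_pos (hemp j (by omega)), hcard j (by omega)]
    have hpow : (2:ℕ) ^ (ℓ+1) = 2 * 2 ^ ℓ := by ring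
    omega
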